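/- arXiv:1712.00299 — 2 statements merged into one kernel-verified Lean document; each statement's English description precedes it below -/
import Mathlib

section
/- For n pairwise non-parallel lines s_1,...,s_n through the origin in ℝ² (n ≥ 3), the total turning t(s_1,...,s_n) = Σ_{i=1}^{n-1} ∠(s_i,s_{i+1}) + ∠(s_n,s_1) is a positive integer multiple of π, and lies in {π, 2π, ..., (n-1)π}. -/
/-- The cyclically next index in `Fin n`. -/
def nxt {n : ℕ} (i : Fin n) : Fin n := ⟨((i : ℕ) + 1) % n, Nat.mod_lt _ i.pos⟩

/-- A line through the origin is represented by its direction angle in `[0, π)`.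
For two non-parallel lines with angles `a ≠ b`, `lineAngle a b ∈ (0, π)` is the unique
angle such that rotating the first line counterclockwise by it yields the second. -/
noncomputable def lineAngle (a b : ℝ) : ℝ := if a < b then b - a else b - a + Real.pi

/-- The total turning `t(s₁,…,sₙ) = Σ_{i=1}^{n-1} ∠(sᵢ,s_{i+1}) + ∠(sₙ,s₁)`. -/
noncomputable def turning {n : ℕ} (θ : Fin n → ℝ) : ℝ :=
  ∑ i : Fin n, lineAngle (θ i) (θ (nxt i))

lemma nxt_eq_add_one {n : ℕ} [NeZero n] (i : Fin n) : nxt i = i + 1 := by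
  apply Fin.ext
  rw [Fin.add_def]
  simp [nxt, Fin.val_one', Nat.add_mod]

lemma nxt_ne {n : ℕ} (hn : 2 ≤ n) (i : Fin n) : nxt i ≠ i := by
  intro h
  have h2 := congrArg Fin.val h
  simp only [nxt] at h2
  have hi := i.isLt
  rcases Nat.lt_or_ge ((i : ℕ) + 1) n with h1 | h1
  · rw [Nat.mod_eq_of_lt h1] at h2; omega
  · have he : (i : ℕ) + 1 = n := by omega
    rw [he, Nat.mod_self] at h2
    omega

/-- for `n ≥ 3` pairwise non-parallel lines through the origin,
the total turning is `kπ` for some integer `k` with `1 ≤ k ≤ n-1`. -/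
theorem turning_mem (n : ℕ) (hn : 3 ≤ n) (θ : Fin n → ℝ)
    (hθ : ∀ i, θ i ∈ Set.Ico 0 Real.pi) (hinj : Function.Injective θ) :
    ∃ k : ℕ, 1 ≤ k ∧ k ≤ n - 1 ∧ turning θ = k * Real.pi := by
  have hn2 : 2 ≤ n := by omega
  haveI : NeZero n := ⟨by omega⟩
  have hne : ∀ i : Fin n, θ (nxt i) ≠ θ i := fun i h =>
    nxt_ne hn2 i (hinj h)
  set S : Finset (Fin n) := Finset.univ.filter (fun i => ¬ θ i < θ (nxt i)) with hS
  refine ⟨S.card, ?_, ?_, ?_⟩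
  · -- nonempty: take argmax
    obtain ⟨j, -, hj⟩ := Finset.exists_max_image (Finset.univ : Finset (Fin n)) θ
      ⟨0, Finset.mem_univ _⟩
    have hjmem : j ∈ S := by
      simp only [hS, Finset.mem_filter, Finset.mem_univ, true_and]
      exact not_lt.mpr (hj (nxt j) (Finset.mem_univ _))
    exact Finset.card_pos.mpr ⟨j, hjmem⟩
  · -- card ≤ n - 1
    obtain ⟨j, -, hj⟩ := Finset.exists_min_image (Finset.univ : Finset (Fin n)) θ
      ⟨0, Finset.mem_univ _⟩
    have hjS : j ∉ S := by
      simp only [hS, Finset.mem_filter, Finset.mem_univ, true_and, not_not]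
      exact lt_of_le_of_ne (hj (nxt j) (Finset.mem_univ _)) (Ne.symm (hne j))
    have hneq : S ≠ Finset.univ := fun h => hjS (h.symm ▸ Finset.mem_univ j)
    have hlt : S.card < n := by
      have := Finset.card_lt_card (Finset.ssubset_univ_iff.mpr hneq)
      simpa using this
    omega
  · -- the sum
    have key : ∀ i : Fin n, lineAngle (θ i) (θ (nxt i)) =
        (θ (nxt i) - θ i) + (if θ i < θ (nxt i) then 0 else Real.pi) := by
      intro i
      unfold lineAngle
      split <;> ring
    rw [turning, Finset.sum_congr rfl (fun i _ => key i), Finset.sum_add_distrib]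
    have h1 : ∑ i : Fin n, (θ (nxt i) - θ i) = 0 := by
      rw [Finset.sum_sub_distrib]
      have : ∑ i : Fin n, θ (nxt i) = ∑ i : Fin n, θ i := by
        simp_rw [nxt_eq_add_one]
        exact Fintype.sum_equiv (Equiv.addRight (1 : Fin n)) _ _ (fun i => rfl)
      rw [this, sub_self]
    have h2 : ∑ i : Fin n, (if θ i < θ (nxt i) then (0:ℝ) else Real.pi) =
        S.card * Real.pi := by
      rw [Finset.sum_ite]
      simp only [Finset.sum_const_zero, zero_add, Finset.sum_const, nsmul_eq_mul, hS]
    rw [h1, h2, zero_add]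
end

section
/- Additivity of the total turning: for n ≥ 4 pairwise non-parallel lines s_1,...,s_n through the origin, t(s_1,...,s_n) = t(s_1,...,s_{n-1}) + t(s_1,s_{n-1},s_n) - π. -/
lemma lineAngle_add_swap {a b : ℝ} (h : a ≠ b) :
    lineAngle a b + lineAngle b a = Real.pi := by
  unfold lineAngle
  rcases h.lt_or_gt with h | h
  · rw [if_pos h, if_neg (not_lt.mpr h.le)]; ring
  · rw [if_neg (not_lt.mpr h.le), if_pos h]; ring

/-- additivity of the total turning. For `n = m+1 ≥ 4` pairwise
non-parallel lines, `t(s₁,…,sₙ) = t(s₁,…,s_{n-1}) + t(s₁,s_{n-1},sₙ) - π`. -/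
theorem turning_additive (m : ℕ) (hm : 3 ≤ m) (θ : Fin (m + 1) → ℝ)
    (hθ : ∀ i, θ i ∈ Set.Ico 0 Real.pi) (hinj : Function.Injective θ) :
    turning θ =
      turning (θ ∘ Fin.castSucc) +
        turning ![θ 0, θ ⟨m - 1, by omega⟩, θ ⟨m, by omega⟩] - Real.pi := by
  have hmpos : 0 < m := by omega
  set a : ℝ := θ 0 with ha
  set b : ℝ := θ ⟨m - 1, by omega⟩ with hb
  set c : ℝ := θ ⟨m, by omega⟩ with hc
  set f : Fin m → ℝ := fun i => lineAngle (θ i.castSucc) (θ (nxt i.castSucc)) with hf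
  set g : Fin m → ℝ := fun i => lineAngle (θ i.castSucc) (θ ((nxt i).castSucc)) with hg
  set j : Fin m := ⟨m - 1, by omega⟩ with hj
  -- turning θ splits off the last term
  have hlast : nxt (Fin.last m) = (0 : Fin (m+1)) := by
    apply Fin.ext; simp [nxt, Fin.last]
  have h1 : turning θ = (∑ i : Fin m, f i) + lineAngle c a := by
    rw [turning, Fin.sum_univ_castSucc, hlast]
    rfl
  have h2 : turning (θ ∘ Fin.castSucc) = ∑ i : Fin m, g i := by
    rw [turning]; rfl
  -- f and g agree except at j
  have hfg : ∑ i : Fin m, (f i - g i) = f j - g j := by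
    apply Finset.sum_eq_single_of_mem j (Finset.mem_univ j)
    intro i _ hij
    have hiv : (i : ℕ) + 1 < m := by
      have := i.isLt
      have : (i : ℕ) ≠ m - 1 := fun h => hij (Fin.ext (by simp [hj, h]))
      omega
    have : nxt i.castSucc = (nxt i).castSucc := by
      apply Fin.ext
      simp [nxt, Fin.castSucc, Nat.mod_eq_of_lt hiv, Nat.mod_eq_of_lt (by omega : (i:ℕ)+1 < m+1)]
    simp [hf, hg, this]
  have hm1 : m - 1 + 1 = m := by omega
  have hjc : (j.castSucc : Fin (m+1)) = ⟨m - 1, by omega⟩ := Fin.ext (by simp [hj])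
  have hfj : f j = lineAngle b c := by
    have hn : nxt (j.castSucc) = ⟨m, by omega⟩ := by
      apply Fin.ext
      show ((j.castSucc : ℕ) + 1) % (m + 1) = m
      have hv : (j.castSucc : ℕ) = m - 1 := rfl
      rw [hv, hm1, Nat.mod_eq_of_lt (by omega)]
    show lineAngle (θ j.castSucc) (θ (nxt j.castSucc)) = lineAngle b c
    rw [hn, hjc]
  have hgj : g j = lineAngle b a := by
    have h0 : nxt j = ⟨0, hmpos⟩ := by
      apply Fin.ext
      show ((j : ℕ) + 1) % m = 0
      have hv : (j : ℕ) = m - 1 := rfl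
      rw [hv, hm1, Nat.mod_self]
    have h0c : ((⟨0, hmpos⟩ : Fin m).castSucc : Fin (m+1)) = 0 := Fin.ext (by simp)
    show lineAngle (θ j.castSucc) (θ ((nxt j).castSucc)) = lineAngle b a
    rw [h0, h0c, hjc]
  -- triangle turning
  have htri : turning ![a, b, c] = lineAngle a b + lineAngle b c + lineAngle c a := by
    rw [turning, Fin.sum_univ_three]
    have e0 : nxt (0 : Fin 3) = 1 := by decide
    have e1 : nxt (1 : Fin 3) = 2 := by decide
    have e2 : nxt (2 : Fin 3) = 0 := by decide
    rw [e0, e1, e2]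
    simp
  have hab : a ≠ b := by
    intro h
    have := hinj h
    rw [Fin.ext_iff] at this
    simp at this
    omega
  have hπ : lineAngle a b + lineAngle b a = Real.pi := lineAngle_add_swap hab
  have hsum : ∑ i : Fin m, f i = (∑ i : Fin m, g i) + (f j - g j) := by
    have := Finset.sum_sub_distrib (f := f) (g := g) (s := Finset.univ)
    rw [hfg] at this
    linarith
  rw [h1, hsum, ← h2, htri, hfj, hgj]
  linarith
end
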